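/- Let Σ be a finite alphabet with |Σ| = k and let L be a commutative language over Σ that is recognized by a DFA with n states. Then the upward closure ↑L is recognized by some DFA with at most n^k states. -/

import Mathlib

open List

def IsCommutativeLang {α : Type} (L : Language α) : Prop :=
  ∀ u v : List α, u ~ v → (u ∈ L ↔ v ∈ L)

def UpClosure {α : Type} (L : Language α) : Language α :=
  {v | ∃ u ∈ L, u <+ v}

def DownClosure {α : Type} (L : Language α) : Language α :=
  {u | ∃ v ∈ L, u <+ v}

def UpInterior {α : Type} (L : Language α) : Language α :=
  {w | ∃ U : Language α, (∀ x ∈ U, x ∈ L) ∧ UpClosure U = U ∧ w ∈ U}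

def DownInterior {α : Type} (L : Language α) : Language α :=
  {w | ∃ U : Language α, (∀ x ∈ U, x ∈ L) ∧ DownClosure U = U ∧ w ∈ U}

def RecognizedBy {α : Type} (L : Language α) (n : ℕ) : Prop :=
  ∃ (σ : Type) (_ : Fintype σ) (M : DFA α σ), Fintype.card σ = n ∧ M.accepts = L

noncomputable def sc {α : Type} (L : Language α) : ℕ :=
  sInf {n | RecognizedBy L n}

def Nerode {α : Type} (L : Language α) (u v : List α) : Prop :=
  ∀ x : List α, u ++ x ∈ L ↔ v ++ x ∈ L

inductive IsShuffle {α : Type} : List α → List α → List α → Prop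
  | nil : IsShuffle [] [] []
  | left (x : α) {u v w : List α} : IsShuffle u v w → IsShuffle (x :: u) v (x :: w)
  | right (y : α) {u v w : List α} : IsShuffle u v w → IsShuffle u (y :: v) (y :: w)

def Shuffle {α : Type} (U V : Language α) : Language α :=
  {w | ∃ u ∈ U, ∃ v ∈ V, IsShuffle u v w}

def IsPermDFA {α σ : Type} (M : DFA α σ) : Prop :=
  ∀ a : α, Function.Bijective fun q => M.step q a

def IsGroupLang {α : Type} (L : Language α) : Prop :=
  ∃ (σ : Type) (_ : Fintype σ) (M : DFA α σ), IsPermDFA M ∧ M.accepts = L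

def wpow {α : Type} (w : List α) (n : ℕ) : List α :=
  (List.replicate n w).flatten

def IsAperiodicDFA {α σ : Type} (M : DFA α σ) : Prop :=
  ∀ (q : σ) (w : List α) (n : ℕ), 1 ≤ n → M.evalFrom q (wpow w n) = q → M.evalFrom q w = q

def IsAperiodicLang {α : Type} (L : Language α) : Prop :=
  ∃ (σ : Type) (_ : Fintype σ) (M : DFA α σ), IsAperiodicDFA M ∧ M.accepts = L

def ShuffleList {α : Type} : List (Language α) → Language α
  | [] => {([] : List α)}
  | L :: Ls => Shuffle L (ShuffleList Ls)

def UnaryGroupLang {α : Type} (a : α) (U : Language α) : Prop :=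
  (∀ w ∈ U, ∀ x ∈ w, x = a) ∧
  ∃ (σ : Type) (_ : Fintype σ) (M : DFA Unit σ), IsPermDFA M ∧
    ∀ n : ℕ, (List.replicate n a ∈ U ↔ List.replicate n () ∈ M.accepts)

def UnaryAperiodicLang {α : Type} (a : α) (U : Language α) : Prop :=
  (∀ w ∈ U, ∀ x ∈ w, x = a) ∧
  ∃ (σ : Type) (_ : Fintype σ) (M : DFA Unit σ), IsAperiodicDFA M ∧
    ∀ n : ℕ, (List.replicate n a ∈ U ↔ List.replicate n () ∈ M.accepts)


section UpAux

variable {α σ : Type}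

lemma evalFrom_replicate_add (M : DFA α σ) (q : σ) (a : α) (i j : ℕ) :
    M.evalFrom q (replicate (i + j) a)
      = M.evalFrom (M.evalFrom q (replicate i a)) (replicate j a) := by
  rw [← DFA.evalFrom_of_append, ← List.replicate_add]

lemma unary_pump [Fintype σ] (M : DFA α σ) {n : ℕ} (hn : Fintype.card σ = n)
    (q : σ) (a : α) : ∀ c : ℕ, ∃ c', c' ≤ min c (n - 1) ∧
      M.evalFrom q (replicate c' a) = M.evalFrom q (replicate c a) := by
  intro c
  induction c using Nat.strong_induction_on with
  | _ c ih =>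
    by_cases hc : c ≤ n - 1
    · exact ⟨c, le_min le_rfl hc, rfl⟩
    · have hn1 : 0 < n := hn ▸ Fintype.card_pos_iff.mpr ⟨q⟩
      have key : ∀ i j : ℕ, i < j → j ≤ n →
          M.evalFrom q (replicate i a) = M.evalFrom q (replicate j a) →
          ∃ c', c' ≤ min c (n - 1) ∧
            M.evalFrom q (replicate c' a) = M.evalFrom q (replicate c a) := by
        intro i j hlt hjn hqe
        have h1 : M.evalFrom q (replicate (c - (j - i)) a)
            = M.evalFrom q (replicate c a) := by
          have e1 : c = j + (c - j) := by omega
          have e2 : c - (j - i) = i + (c - j) := by omega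
          rw [e2, evalFrom_replicate_add, hqe, ← evalFrom_replicate_add, ← e1]
        obtain ⟨c', hc', he⟩ := ih (c - (j - i)) (by omega)
        exact ⟨c', by omega, he.trans h1⟩
      obtain ⟨i, j, hij, heq⟩ := Fintype.exists_ne_map_eq_of_card_lt
        (fun j : Fin (n + 1) => M.evalFrom q (replicate (j : ℕ) a))
        (by simp [hn])
      rcases lt_or_gt_of_ne hij with h | h
      · exact key i j h (by omega) heq
      · exact key j i h (by omega) heq.symm

lemma flatMap_congr' {β : Type} {f g : α → List β} :
    ∀ {l : List α}, (∀ x ∈ l, f x = g x) → l.flatMap f = l.flatMap g := by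
  intro l
  induction l with
  | nil => simp
  | cons a l ih =>
    intro h
    rw [flatMap_cons, flatMap_cons, h a mem_cons_self, ih fun x hx => h x (mem_cons_of_mem a hx)]

lemma list_pump [Fintype σ] [DecidableEq α] (M : DFA α σ) {n : ℕ}
    (hn : Fintype.card σ = n) :
    ∀ (l : List α), l.Nodup → ∀ (q : σ) (c : α → ℕ),
    ∃ m : α → ℕ, (∀ a, m a ≤ min (c a) (n - 1)) ∧
      M.evalFrom q (l.flatMap fun a => replicate (m a) a)
        = M.evalFrom q (l.flatMap fun a => replicate (c a) a) := by
  intro l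
  induction l with
  | nil => exact fun _ q c => ⟨fun a => min (c a) (n - 1), fun a => le_rfl, rfl⟩
  | cons a l ih =>
    intro hnd q c
    obtain ⟨c', hc', he⟩ := unary_pump M hn q a (c a)
    obtain ⟨m, hm, hme⟩ := ih hnd.of_cons (M.evalFrom q (replicate (c a) a)) c
    have hanl : a ∉ l := (List.nodup_cons.mp hnd).1
    refine ⟨Function.update m a c', ?_, ?_⟩
    · intro b
      by_cases hb : b = a
      · subst hb; simpa using hc'
      · simpa [Function.update_of_ne hb] using hm b
    · have hagree : (l.flatMap fun b => replicate (Function.update m a c' b) b)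
          = l.flatMap fun b => replicate (m b) b :=
        flatMap_congr' fun b hb => by
          rw [Function.update_of_ne (by rintro rfl; exact hanl hb)]
      rw [flatMap_cons, flatMap_cons, Function.update_self, hagree,
        DFA.evalFrom_of_append, DFA.evalFrom_of_append, he, hme]

lemma count_flatMap_replicate [DecidableEq α] (m : α → ℕ) :
    ∀ (l : List α), l.Nodup → ∀ b ∈ l,
      count b (l.flatMap fun a => replicate (m a) a) = m b := by
  intro l
  induction l with
  | nil => simp
  | cons a l ih =>
    intro hnd b hb
    have hanl : a ∉ l := (List.nodup_cons.mp hnd).1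
    rw [flatMap_cons, count_append]
    rcases List.mem_cons.mp hb with rfl | hb'
    · have h0 : count b (l.flatMap fun a => replicate (m a) a) = 0 := by
        rw [count_eq_zero]
        intro hmem
        obtain ⟨a', ha', hba'⟩ := List.mem_flatMap.mp hmem
        exact hanl ((List.eq_of_mem_replicate hba') ▸ ha')
      simp [h0, count_replicate]
    · have hne : a ≠ b := fun h => hanl (h ▸ hb')
      simp [count_replicate, hne, ih hnd.of_cons b hb']

lemma mem_flatMap_replicate [DecidableEq α] (m : α → ℕ) (l : List α) :
    ∀ b ∈ (l.flatMap fun a => replicate (m a) a), b ∈ l := by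
  intro b hb
  obtain ⟨a', ha', hba'⟩ := List.mem_flatMap.mp hb
  exact (List.eq_of_mem_replicate hba') ▸ ha'

end UpAux

section UpMain

open List

variable {α : Type}

noncomputable def wordOf [Fintype α] [DecidableEq α] (m : α → ℕ) : List α :=
  (Finset.univ.toList (α := α)).flatMap fun a => List.replicate (m a) a

def capDFA (α : Type) [Fintype α] [DecidableEq α] (n : ℕ) (hn : 0 < n)
    (L : Language α) : DFA α (α → Fin n) where
  step f x := fun b => if b = x then ⟨min ((f b : ℕ) + 1) (n - 1), by omega⟩ else f b
  start := fun _ => ⟨0, hn⟩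
  accept := {f | ∃ m : α → ℕ, (∀ a, m a ≤ (f a : ℕ)) ∧ wordOf m ∈ L}

def encodeCnt {α : Type} (n : ℕ) (hn : 0 < n) (c : α → ℕ) : α → Fin n :=
  fun a => ⟨min (c a) (n - 1), by omega⟩

lemma capDFA_evalFrom [Fintype α] [DecidableEq α] {n : ℕ} (hn : 0 < n)
    (L : Language α) :
    ∀ (w : List α) (c : α → ℕ),
      (capDFA α n hn L).evalFrom (encodeCnt n hn c) w
        = encodeCnt n hn (fun a => c a + count a w) := by
  intro w
  induction w with
  | nil =>
    intro c
    simp only [DFA.evalFrom, List.foldl_nil]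
    funext a
    simp [encodeCnt]
  | cons x w ih =>
    intro c
    have hstep : (capDFA α n hn L).step (encodeCnt n hn c) x
        = encodeCnt n hn (fun a => if a = x then c a + 1 else c a) := by
      funext b
      by_cases hb : b = x
      · subst hb
        apply Fin.ext
        simp [capDFA, encodeCnt]
        omega
      · apply Fin.ext
        simp [capDFA, encodeCnt, hb]
    show (capDFA α n hn L).evalFrom ((capDFA α n hn L).step (encodeCnt n hn c) x) w = _
    rw [hstep, ih]
    funext a
    apply Fin.ext
    simp only [encodeCnt, count_cons]
    by_cases ha : a = x
    · subst ha; simp; ring_nf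
    · simp [ha, Ne.symm ha]

theorem upClosure_main [Fintype α] [DecidableEq α] (k n : ℕ)
    (hk : Fintype.card α = k) (L : Language α) (hcomm : IsCommutativeLang L)
    (hrec : ∃ (σ : Type) (_ : Fintype σ) (M : DFA α σ),
      Fintype.card σ = n ∧ M.accepts = L) :
    ∃ (τ : Type) (_ : Fintype τ) (M' : DFA α τ),
      Fintype.card τ ≤ n ^ k ∧ M'.accepts = UpClosure L := by
  obtain ⟨σ, instσ, M, hcard, hacc⟩ := hrec
  have hn : 0 < n := hcard ▸ Fintype.card_pos_iff.mpr ⟨M.start⟩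
  refine ⟨α → Fin n, inferInstance, capDFA α n hn L, ?_, ?_⟩
  · rw [Fintype.card_fun, Fintype.card_fin, hk]
  · ext w
    have hstart : (capDFA α n hn L).start = encodeCnt n hn (fun _ => 0) := by
      funext a; apply Fin.ext; simp [capDFA, encodeCnt]
    have hmem : w ∈ (capDFA α n hn L).accepts ↔
        ∃ m : α → ℕ, (∀ a, m a ≤ min (count a w) (n - 1)) ∧ wordOf m ∈ L := by
      rw [DFA.mem_accepts]
      have he : (capDFA α n hn L).eval w = encodeCnt n hn (fun a => count a w) := by
        show (capDFA α n hn L).evalFrom (capDFA α n hn L).start w = _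
        rw [hstart, capDFA_evalFrom hn L w]
        funext a
        simp
      rw [he]
      show (∃ m : α → ℕ, (∀ a, m a ≤ (encodeCnt n hn (fun a => count a w) a : ℕ))
        ∧ wordOf m ∈ L) ↔ _
      constructor
      · rintro ⟨m, hm, hmL⟩
        exact ⟨m, fun a => by simpa [encodeCnt] using hm a, hmL⟩
      · rintro ⟨m, hm, hmL⟩
        exact ⟨m, fun a => by simpa [encodeCnt] using hm a, hmL⟩
    rw [hmem]
    have hlnd : (Finset.univ.toList (α := α)).Nodup := Finset.nodup_toList _
    have hlmem : ∀ a : α, a ∈ Finset.univ.toList (α := α) := fun a =>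
      (Finset.mem_toList).mpr (Finset.mem_univ a)
    constructor
    · rintro ⟨m, hm, hmL⟩
      have hsp : wordOf m <+~ w := by
        rw [List.subperm_ext_iff]
        intro x hx
        rw [wordOf, count_flatMap_replicate m _ hlnd x (hlmem x)]
        have := hm x
        omega
      obtain ⟨u, hperm, hsub⟩ := hsp
      exact ⟨u, (hcomm u (wordOf m) hperm).mpr hmL, hsub⟩
    · rintro ⟨u, huL, husub⟩
      have hu : u ~ wordOf (fun a => count a u) := by
        rw [List.perm_iff_count]
        intro a
        rw [wordOf, count_flatMap_replicate _ _ hlnd a (hlmem a)]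
      have hwc : wordOf (fun a => count a u) ∈ L := (hcomm _ _ hu).mp huL
      rw [← hacc, DFA.mem_accepts] at hwc
      obtain ⟨m, hm, hme⟩ := list_pump M hcard (Finset.univ.toList (α := α)) hlnd
        M.start (fun a => count a u)
      refine ⟨m, fun a => ?_, ?_⟩
      · have h1 := hm a
        have h2 : count a u ≤ count a w := husub.count_le a
        omega
      · rw [← hacc, DFA.mem_accepts]
        show M.eval (wordOf m) ∈ M.accept
        have heq : M.eval (wordOf m) = M.eval (wordOf fun a => count a u) := hme
        rw [heq]
        exact hwc
    
end UpMain

/-- upward closure of a commutative language recognized by a DFA with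
`n` states is recognized by a DFA with at most `n ^ k` states, `k` the alphabet size. -/
theorem upClosure_state_bound {α : Type} [Fintype α] (k n : ℕ)
    (hk : Fintype.card α = k) (L : Language α) (hcomm : IsCommutativeLang L)
    (hrec : ∃ (σ : Type) (_ : Fintype σ) (M : DFA α σ),
      Fintype.card σ = n ∧ M.accepts = L) :
    ∃ (τ : Type) (_ : Fintype τ) (M' : DFA α τ),
      Fintype.card τ ≤ n ^ k ∧ M'.accepts = UpClosure L := by
  letI := Classical.decEq α
  exact upClosure_main k n hk L hcomm hrec
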